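/- For every locally uniform 2-lobster L of length k ≥ 1, β_b(L) ≥ 2(k − 1) + 12 = 2(diam(L) − 1) + 4. -/

import Mathlib

noncomputable section

open scoped Classical

variable {V : Type*}

/-- A pendent vertex (leaf): a vertex with exactly one neighbour. -/
def SimpleGraph.IsLeafVert (G : SimpleGraph V) (v : V) : Prop :=
  (G.neighborSet v).ncard = 1

/-- The eccentricity of a vertex: the maximum distance from it to any vertex. -/
def ecc [Fintype V] (G : SimpleGraph V) (v : V) : ℕ :=
  Finset.univ.sup fun u => G.dist v u

/-- The diameter of a graph: the maximum eccentricity. -/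
def gdiam [Fintype V] (G : SimpleGraph V) : ℕ :=
  Finset.univ.sup fun v => ecc G v

/-- A broadcast on `G`: `f v ≤ e_G(v)` for every vertex `v`. -/
def IsBroadcast [Fintype V] (G : SimpleGraph V) (f : V → ℕ) : Prop :=
  ∀ v, f v ≤ ecc G v

/-- The cost of a broadcast. -/
def bcost [Fintype V] (f : V → ℕ) : ℕ :=
  ∑ v, f v

/-- An independent broadcast: a broadcast such that every two distinct broadcast
vertices `u, v` satisfy `d_G(u,v) > max (f u) (f v)`. -/
def IsIndepBroadcast [Fintype V] (G : SimpleGraph V) (f : V → ℕ) : Prop :=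
  IsBroadcast G f ∧
    ∀ u v : V, u ≠ v → 0 < f u → 0 < f v → max (f u) (f v) < G.dist u v

/-- The broadcast independence number: maximum cost of an independent broadcast. -/
def betaB [Fintype V] (G : SimpleGraph V) : ℕ :=
  sSup {c : ℕ | ∃ f : V → ℕ, IsIndepBroadcast G f ∧ bcost f = c}

/-- A dominating broadcast: every vertex is within distance `f u` of some
broadcast vertex `u`. -/
def IsDominatingBroadcast [Fintype V] (G : SimpleGraph V) (f : V → ℕ) : Prop :=
  ∀ w : V, ∃ u : V, 0 < f u ∧ G.dist u w ≤ f u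

/-- A graph is a (nonempty) path graph if its vertices can be enumerated
`w_0, …, w_n` with adjacency exactly between consecutive vertices. -/
def IsPathGraph {W : Type*} (P : SimpleGraph W) : Prop :=
  ∃ (n : ℕ) (e : W ≃ Fin (n + 1)),
    ∀ a b : W, P.Adj a b ↔ ((e a : ℕ) + 1 = (e b : ℕ) ∨ (e b : ℕ) + 1 = (e a : ℕ))

/-- The set of non-leaf vertices. -/
def nonleaves (G : SimpleGraph V) : Set V :=
  {v | ¬ G.IsLeafVert v}

/-- The graph obtained from `G` by deleting all its leaves. -/
def pruned (G : SimpleGraph V) : SimpleGraph (nonleaves G) :=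
  SimpleGraph.induce (nonleaves G) G

/-- A caterpillar: a tree such that deleting all leaves yields a nonempty path. -/
def IsCaterpillar (G : SimpleGraph V) : Prop :=
  G.IsTree ∧ IsPathGraph (pruned G)

/-- A lobster: a tree such that deleting all leaves yields a caterpillar. -/
def IsLobster (G : SimpleGraph V) : Prop :=
  G.IsTree ∧ IsCaterpillar (pruned G)

/-- The set of spine vertices of a lobster: the vertices remaining after
deleting all leaves and then all leaves of the resulting caterpillar. -/
def spineSet (G : SimpleGraph V) : Set V :=
  {x | ∃ h : x ∈ nonleaves G, (⟨x, h⟩ : nonleaves G) ∈ nonleaves (pruned G)}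

/-- An enumeration `v 0, …, v k` of the spine of a lobster as a path. -/
structure SpineEnum (G : SimpleGraph V) (k : ℕ) where
  v : ℕ → V
  inj : ∀ i ≤ k, ∀ j ≤ k, v i = v j → i = j
  mem : ∀ x : V, x ∈ spineSet G ↔ ∃ i ≤ k, v i = x
  adj : ∀ i ≤ k, ∀ j ≤ k, (G.Adj (v i) (v j) ↔ i + 1 = j ∨ j + 1 = i)

/-- The graph obtained from `G` by deleting all spine edges. -/
def offSpine (G : SimpleGraph V) : SimpleGraph V :=
  G.deleteEdges {e : Sym2 V | ∀ x ∈ e, x ∈ spineSet G}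

/-- The vertex set of the spine-subtree rooted at `u`: the connected component
of `u` after deleting all spine edges. -/
def Ssub (G : SimpleGraph V) (u : V) : Set V :=
  {x | (offSpine G).Reachable u x}

/-- `f*(S_u)`: the sum of the values of `f` on the spine-subtree rooted at `u`. -/
def fstar (G : SimpleGraph V) (f : V → ℕ) (u : V) : ℕ :=
  ∑ᶠ x ∈ Ssub G u, f x

/-- A spine-subtree rooted at `u` is of type S1 if every leaf in it is at
distance 1 from `u`. -/
def typeS1 (G : SimpleGraph V) (u : V) : Prop :=
  ∀ x ∈ Ssub G u, G.IsLeafVert x → G.dist u x = 1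

/-- A spine-subtree rooted at `u` is of type S2 if every leaf in it is at
distance 2 from `u`. -/
def typeS2 (G : SimpleGraph V) (u : V) : Prop :=
  ∀ x ∈ Ssub G u, G.IsLeafVert x → G.dist u x = 2

/-- A lobster is locally uniform if every spine-subtree is of type S1 or S2. -/
def LocallyUniform (G : SimpleGraph V) {k : ℕ} (s : SpineEnum G k) : Prop :=
  ∀ i ≤ k, typeS1 G (s.v i) ∨ typeS2 G (s.v i)

/-- The roots of the branches of the spine-subtree rooted at `u`:
the non-spine neighbours of `u`. -/
def branchRoots (G : SimpleGraph V) (u : V) : Set V :=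
  (offSpine G).neighborSet u

/-- A 2-lobster: every spine-subtree has at least two branches. -/
def IsTwoLobster (G : SimpleGraph V) {k : ℕ} (s : SpineEnum G k) : Prop :=
  ∀ i ≤ k, 2 ≤ (branchRoots G (s.v i)).ncard

/-- The 1-leaves of the spine-subtree rooted at `u`. -/
def oneLeaves (G : SimpleGraph V) (u : V) : Set V :=
  {x | x ∈ Ssub G u ∧ G.IsLeafVert x ∧ G.dist u x = 1}

/-- The 2-leaves of the spine-subtree rooted at `u`. -/
def twoLeaves (G : SimpleGraph V) (u : V) : Set V :=
  {x | x ∈ Ssub G u ∧ G.IsLeafVert x ∧ G.dist u x = 2}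

/-- An only-leaf: a leaf whose neighbour has exactly one leaf neighbour. -/
def IsOnlyLeaf (G : SimpleGraph V) (x : V) : Prop :=
  G.IsLeafVert x ∧ ∀ y : V, G.Adj x y → {z | G.Adj y z ∧ G.IsLeafVert z}.ncard = 1

/-- The 2-only-leaves of the spine-subtree rooted at `u`. -/
def twoOnlyLeaves (G : SimpleGraph V) (u : V) : Set V :=
  {x | x ∈ twoLeaves G u ∧ IsOnlyLeaf G x}

/-- `λ1(S_u)`: the number of 1-leaves of the spine-subtree rooted at `u`. -/
def lam1 (G : SimpleGraph V) (u : V) : ℕ := (oneLeaves G u).ncard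

/-- `λ2(S_u)`: the number of 2-leaves of the spine-subtree rooted at `u`. -/
def lam2 (G : SimpleGraph V) (u : V) : ℕ := (twoLeaves G u).ncard

/-- `λ2*(S_u)`: the number of 2-only-leaves of the spine-subtree rooted at `u`. -/
def lam2star (G : SimpleGraph V) (u : V) : ℕ := (twoOnlyLeaves G u).ncard

/-- The 2-leaves of the branch of `S_u` rooted at the neighbour `w` of `u`. -/
def branchTwoLeaves (G : SimpleGraph V) (u w : V) : Set V :=
  {x | G.Adj w x ∧ x ≠ u ∧ G.IsLeafVert x}

/-- The branches of `S_u` having at most two 2-leaves. -/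
def smallBranches (G : SimpleGraph V) (u : V) : Set V :=
  {w | w ∈ branchRoots G u ∧ (branchTwoLeaves G u w).ncard ≤ 2}

/-- `α2*(S_u)`: the number of branches of `S_u` containing no 1-leaf
(type B2) and having at most two 2-leaves. -/
def alpha2star (G : SimpleGraph V) (u : V) : ℕ :=
  {w | w ∈ branchRoots G u ∧ ¬ G.IsLeafVert w ∧
    (branchTwoLeaves G u w).ncard ≤ 2}.ncard

/-- Type F_A: type S2 and every branch has at least three 2-leaves. -/
def typeFA (G : SimpleGraph V) (u : V) : Prop :=
  typeS2 G u ∧ ∀ w ∈ branchRoots G u, 3 ≤ (branchTwoLeaves G u w).ncard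

/-- Type X_a: type S1 with at least three leaves. -/
def typeXa (G : SimpleGraph V) (u : V) : Prop :=
  typeS1 G u ∧ 3 ≤ lam1 G u

/-- Type X_b: type S2 with exactly one branch having at most two 2-leaves. -/
def typeXb (G : SimpleGraph V) (u : V) : Prop :=
  typeS2 G u ∧ (smallBranches G u).ncard = 1

/-- Type Y_C: type S2 with at least two branches having at most two 2-leaves. -/
def typeYc (G : SimpleGraph V) (u : V) : Prop :=
  typeS2 G u ∧ 2 ≤ (smallBranches G u).ncard

/-- Type G: type S1 with exactly two leaves, having at least one neighbouring
spine-subtree of type S1. -/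
def typeG' (G : SimpleGraph V) {k : ℕ} (s : SpineEnum G k) (i : ℕ) : Prop :=
  typeS1 G (s.v i) ∧ lam1 G (s.v i) = 2 ∧
    ((0 < i ∧ typeS1 G (s.v (i - 1))) ∨ (i < k ∧ typeS1 G (s.v (i + 1))))

/-- Type X_c: type S1 with exactly two leaves, both neighbouring spine-subtrees
existing and being of type S2. -/
def typeXc (G : SimpleGraph V) {k : ℕ} (s : SpineEnum G k) (i : ℕ) : Prop :=
  typeS1 G (s.v i) ∧ lam1 G (s.v i) = 2 ∧
    0 < i ∧ i < k ∧ typeS2 G (s.v (i - 1)) ∧ typeS2 G (s.v (i + 1))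

/-- Type X: type X_a, X_b or X_c. -/
def typeX (G : SimpleGraph V) {k : ℕ} (s : SpineEnum G k) (i : ℕ) : Prop :=
  typeXa G (s.v i) ∨ typeXb G (s.v i) ∨ typeXc G s i

/-- Type F_A, G or X_a. -/
def FGXa (G : SimpleGraph V) {k : ℕ} (s : SpineEnum G k) (i : ℕ) : Prop :=
  typeFA G (s.v i) ∨ typeG' G s i ∨ typeXa G (s.v i)

/-- The sequence of spine-subtrees `S i, S (i+1), …, S (i + 2*j)` is of type T_4. -/
def isT4 (G : SimpleGraph V) {k : ℕ} (s : SpineEnum G k) (i j : ℕ) : Prop :=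
  i + 2 * j ≤ k ∧
  (∀ m ≤ j, typeFA G (s.v (i + 2 * m))) ∧
  (∀ m < j, typeX G s (i + 2 * m + 1) ∨ typeFA G (s.v (i + 2 * m + 1))) ∧
  (¬ (2 ≤ i ∧ typeFA G (s.v (i - 2)) ∧
      (typeX G s (i - 1) ∨ typeFA G (s.v (i - 1))))) ∧
  (¬ (i + 2 * j + 2 ≤ k ∧ typeFA G (s.v (i + 2 * j + 2)) ∧
      (typeX G s (i + 2 * j + 1) ∨ typeFA G (s.v (i + 2 * j + 1))))) ∧
  (1 ≤ i → FGXa G s (i - 1)) ∧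
  (2 ≤ i → ¬ typeXc G s (i - 2)) ∧
  (i + 2 * j + 1 ≤ k → FGXa G s (i + 2 * j + 1)) ∧
  (i + 2 * j + 2 ≤ k → ¬ typeXc G s (i + 2 * j + 2))

/-- The spine-subtree `S i` belongs to some sequence of type T_4. -/
def inT4 (G : SimpleGraph V) {k : ℕ} (s : SpineEnum G k) (i : ℕ) : Prop :=
  ∃ a j, isT4 G s a j ∧ a ≤ i ∧ i ≤ a + 2 * j

/-- The spine-subtree `S i` appears as an F_A-spine-subtree (even offset)
in some sequence of type T_4. -/
def inT4asFA (G : SimpleGraph V) {k : ℕ} (s : SpineEnum G k) (i : ℕ) : Prop :=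
  ∃ a j, isT4 G s a j ∧ ∃ m ≤ j, i = a + 2 * m

/-- The 1-leaves of the lobster `G`: leaves adjacent to a spine vertex. -/
def oneLeavesL (G : SimpleGraph V) : Set V :=
  {x | G.IsLeafVert x ∧ ∃ u ∈ spineSet G, G.Adj u x}

/-- The 2-leaves of the lobster `G`: leaves not adjacent to any spine vertex
(i.e. at distance 2 from their nearest spine vertex). -/
def twoLeavesL (G : SimpleGraph V) : Set V :=
  {x | G.IsLeafVert x ∧ ¬ ∃ u ∈ spineSet G, G.Adj u x}

/-- `λ1(L)`: the number of 1-leaves of `G`. -/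
def lam1L (G : SimpleGraph V) : ℕ := (oneLeavesL G).ncard

/-- `λ2(L)`: the number of 2-leaves of `G`. -/
def lam2L (G : SimpleGraph V) : ℕ := (twoLeavesL G).ncard

/-- `λ2*(L)`: the number of 2-only-leaves of `G`. -/
def lam2starL (G : SimpleGraph V) : ℕ :=
  {x | x ∈ twoLeavesL G ∧ IsOnlyLeaf G x}.ncard

/-- `ν2(L)`: the number of branches having at most two 2-leaves that belong
to spine-subtrees of type S2. -/
def nu2 (G : SimpleGraph V) {k : ℕ} (s : SpineEnum G k) : ℕ :=
  ∑ i ∈ Finset.range (k + 1),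
    if typeS2 G (s.v i) then (smallBranches G (s.v i)).ncard else 0

/-- `ν3(L)`: the number of spine-subtrees of type X_c. -/
def nu3 (G : SimpleGraph V) {k : ℕ} (s : SpineEnum G k) : ℕ :=
  ((Finset.range (k + 1)).filter (fun i => typeXc G s i)).card

/-- `ν4(L)`: the sum over all sequences of type T_4 of
`(j + 1) - #(spine-subtrees of type X_b or X_c in the sequence)`. -/
def nu4 (G : SimpleGraph V) {k : ℕ} (s : SpineEnum G k) : ℕ :=
  ∑ i ∈ Finset.range (k + 1), ∑ j ∈ Finset.range (k + 1),
    if isT4 G s i j then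
      (j + 1) - ((Finset.range (2 * j + 1)).filter
        (fun m => typeXb G (s.v (i + m)) ∨ typeXc G s (i + m))).card
    else 0

/-- `β*(L) = ν1(L) + ν2(L) + ν3(L) + ν4(L)` where
`ν1(L) = λ1(L) + λ2(L) + λ2*(L)`. -/
def betaStar (G : SimpleGraph V) {k : ℕ} (s : SpineEnum G k) : ℕ :=
  (lam1L G + lam2L G + lam2starL G) + nu2 G s + nu3 G s + nu4 G s

/-! ### Auxiliary development for Statement 10 -/

section Stmt10Aux

set_option linter.unusedSectionVars false

open SimpleGraph

variable [Fintype V] {G : SimpleGraph V} {k : ℕ}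

/-- A set closed under adjacency contains everything reachable from a member. -/
lemma aux_walk_closed {W : Type*} {G' : SimpleGraph W} {S : Set W}
    (hS : ∀ a ∈ S, ∀ b, G'.Adj a b → b ∈ S) :
    ∀ {u v : W}, G'.Walk u v → u ∈ S → v ∈ S := by
  intro u v p
  induction p with
  | nil => exact id
  | cons h _ ih => exact fun hu => ih (hS _ hu _ h)

lemma leaf_nbr {W : Type*} {G' : SimpleGraph W} {x : W} (h : G'.IsLeafVert x) :
    ∃ y, G'.Adj x y ∧ ∀ z, G'.Adj x z → z = y := by
  obtain ⟨y, hy⟩ := Set.ncard_eq_one.mp h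
  refine ⟨y, ?_, ?_⟩
  · have : y ∈ G'.neighborSet x := by rw [hy]; rfl
    exact this
  · intro z hz
    have : z ∈ G'.neighborSet x := hz
    rw [hy] at this
    exact this

lemma leaf_adj_unique {W : Type*} {G' : SimpleGraph W} {x a b : W}
    (h : G'.IsLeafVert x) (ha : G'.Adj x a) (hb : G'.Adj x b) : a = b := by
  obtain ⟨y, _, hy⟩ := leaf_nbr h
  rw [hy a ha, hy b hb]

lemma tree_path_unique (ht : G.IsTree) {a b : V} {p q : G.Walk a b}
    (hp : p.IsPath) (hq : q.IsPath) : p = q := by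
  obtain ⟨r, _, hr⟩ := ht.existsUnique_path a b
  rw [hr p hp, hr q hq]

lemma tree_dist_eq (ht : G.IsTree) {a b : V} {p : G.Walk a b} (hp : p.IsPath) :
    G.dist a b = p.length := by
  refine le_antisymm (SimpleGraph.dist_le p) ?_
  obtain ⟨w, hw⟩ :=
    (ht.isConnected.preconnected a b).exists_walk_length_eq_dist
  calc p.length = w.bypass.length := by
        rw [tree_path_unique ht hp w.bypass_isPath]
    _ ≤ w.length := w.length_bypass_le
    _ = G.dist a b := hw

lemma spine_mem (s : SpineEnum G k) {i : ℕ} (hi : i ≤ k) : s.v i ∈ spineSet G :=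
  (s.mem _).2 ⟨i, hi, rfl⟩

lemma spine_nonleaf (s : SpineEnum G k) {i : ℕ} (hi : i ≤ k) :
    ¬ G.IsLeafVert (s.v i) := by
  obtain ⟨h, -⟩ := spine_mem s hi
  exact h

lemma spine_adj (s : SpineEnum G k) {i : ℕ} (hi : i + 1 ≤ k) :
    G.Adj (s.v i) (s.v (i + 1)) :=
  (s.adj i (by omega) (i + 1) hi).2 (Or.inl rfl)

/-- The walk along the spine from `v i` to `v (i+n)`. -/
def spineWalk (s : SpineEnum G k) : ∀ (n i : ℕ), i + n ≤ k → G.Walk (s.v i) (s.v (i + n))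
  | 0, i, _ => SimpleGraph.Walk.nil
  | n + 1, i, h =>
      SimpleGraph.Walk.cons (spine_adj s (by omega))
        ((spineWalk s n (i + 1) (by omega)).copy rfl (by congr 1; omega))

lemma spineWalk_length (s : SpineEnum G k) :
    ∀ (n i : ℕ) (h : i + n ≤ k), (spineWalk s n i h).length = n := by
  intro n
  induction n with
  | zero => intro i h; rfl
  | succ n ih =>
      intro i h
      simp [spineWalk, SimpleGraph.Walk.length_copy, ih]

lemma spineWalk_support (s : SpineEnum G k) :
    ∀ (n i : ℕ) (h : i + n ≤ k),
      (spineWalk s n i h).support = (List.range (n + 1)).map (fun t => s.v (i + t)) := by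
  intro n
  induction n with
  | zero => intro i h; rfl
  | succ n ih =>
      intro i h
      have h1 : (spineWalk s (n + 1) i h).support
          = s.v i :: List.map (fun t => s.v (i + 1 + t)) (List.range (n + 1)) := by
        simp only [spineWalk, SimpleGraph.Walk.support_cons, SimpleGraph.Walk.support_copy, ih]
      rw [h1]
      conv_rhs => rw [List.range_succ_eq_map]
      rw [List.map_cons, List.map_map]
      have h2 : ((fun t => s.v (i + t)) ∘ Nat.succ) = fun t => s.v (i + 1 + t) := by
        funext t; simp only [Function.comp_apply]; congr 1; omega
      rw [h2]
      rfl

lemma spineWalk_isPath (s : SpineEnum G k) (n i : ℕ) (h : i + n ≤ k) :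
    (spineWalk s n i h).IsPath := by
  rw [SimpleGraph.Walk.isPath_def, spineWalk_support]
  refine List.Nodup.map_on ?_ List.nodup_range
  intro a ha b hb hab
  rw [List.mem_range] at ha hb
  have := s.inj (i + a) (by omega) (i + b) (by omega) hab
  omega

lemma spine_dist (ht : G.IsTree) (s : SpineEnum G k) {n i : ℕ} (h : i + n ≤ k) :
    G.dist (s.v i) (s.v (i + n)) = n := by
  rw [tree_dist_eq ht (spineWalk_isPath s n i h), spineWalk_length]

lemma offSpine_adj_iff {a b : V} :
    (offSpine G).Adj a b ↔ G.Adj a b ∧ ¬(a ∈ spineSet G ∧ b ∈ spineSet G) := by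
  constructor
  · intro h
    rw [offSpine, SimpleGraph.deleteEdges_adj] at h
    refine ⟨h.1, fun hab => h.2 ?_⟩
    intro x hx
    rw [Sym2.mem_iff] at hx
    rcases hx with rfl | rfl
    · exact hab.1
    · exact hab.2
  · intro ⟨h1, h2⟩
    rw [offSpine, SimpleGraph.deleteEdges_adj]
    refine ⟨h1, fun hmem => h2 ?_⟩
    exact ⟨hmem a (by simp), hmem b (by simp)⟩

lemma ssub_spine (ht : G.IsTree) (s : SpineEnum G k) {i j : ℕ} (hi : i ≤ k) (hj : j ≤ k)
    (h : (offSpine G).Reachable (s.v i) (s.v j)) : i = j := by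
  by_contra hne
  wlog hij : i < j generalizing i j
  · exact this hj hi h.symm (Ne.symm hne) (by omega)
  obtain ⟨w⟩ := h
  have hGedge : ∀ e ∈ w.bypass.edges, e ∈ G.edgeSet := fun e he =>
    SimpleGraph.edgeSet_mono (SimpleGraph.deleteEdges_le _) (w.bypass.edges_subset_edgeSet he)
  set P := w.bypass.transfer G hGedge with hP
  have hPpath : P.IsPath := by
    rw [SimpleGraph.Walk.isPath_def, SimpleGraph.Walk.support_transfer]
    exact w.bypass_isPath.support_nodup
  obtain ⟨m, hm⟩ : ∃ m, j = i + (m + 1) := ⟨j - i - 1, by omega⟩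
  set Q := (spineWalk s (m + 1) i (by omega)).copy rfl
    (show s.v (i + (m + 1)) = s.v j by congr 1; omega) with hQ
  have hQpath : Q.IsPath := by
    rw [hQ, SimpleGraph.Walk.isPath_def, SimpleGraph.Walk.support_copy,
      ← SimpleGraph.Walk.isPath_def]
    exact spineWalk_isPath s _ _ _
  have hPQ : P = Q := tree_path_unique ht hPpath hQpath
  have hedge : s(s.v i, s.v (i + 1)) ∈ Q.edges := by
    rw [hQ, SimpleGraph.Walk.edges_copy]
    simp [spineWalk, SimpleGraph.Walk.edges_cons]
  rw [← hPQ, hP, SimpleGraph.Walk.edges_transfer] at hedge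
  have hoff : (offSpine G).Adj (s.v i) (s.v (i + 1)) :=
    (SimpleGraph.Walk.edges_subset_edgeSet _ hedge : _)
  exact (offSpine_adj_iff.mp hoff).2 ⟨spine_mem s (by omega), spine_mem s (by omega)⟩

lemma ssub_disjoint (ht : G.IsTree) (s : SpineEnum G k) {i j : ℕ} (hi : i ≤ k) (hj : j ≤ k)
    {x : V} (hxi : x ∈ Ssub G (s.v i)) (hxj : x ∈ Ssub G (s.v j)) : i = j :=
  ssub_spine ht s hi hj ((hxi : (offSpine G).Reachable _ _).trans
    (hxj : (offSpine G).Reachable _ _).symm)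

end Stmt10Aux
section Stmt10Aux2

set_option linter.unusedSectionVars false

variable [Fintype V] {G : SimpleGraph V} {k : ℕ}

lemma spine_nonleafP (s : SpineEnum G k) {i : ℕ} (hi : i ≤ k) :
    ∃ h : s.v i ∈ nonleaves G, ¬ (pruned G).IsLeafVert ⟨s.v i, h⟩ := by
  obtain ⟨h, h'⟩ := spine_mem s hi
  exact ⟨h, h'⟩

lemma no_adj_leaves (hL : IsLobster G) (s : SpineEnum G k) {x y : V}
    (hxy : G.Adj x y) (hx : G.IsLeafVert x) (hy : G.IsLeafVert y) : False := by
  have hcl : ∀ a ∈ ({x, y} : Set V), ∀ b, G.Adj a b → b ∈ ({x, y} : Set V) := by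
    rintro a ha b hb
    simp only [Set.mem_insert_iff, Set.mem_singleton_iff] at ha ⊢
    rcases ha with rfl | rfl
    · right; exact leaf_adj_unique hx hb hxy
    · left; exact leaf_adj_unique hy hb hxy.symm
  obtain ⟨p⟩ := hL.1.isConnected.preconnected x (s.v 0)
  have hm := aux_walk_closed hcl p (Set.mem_insert x _)
  simp only [Set.mem_insert_iff, Set.mem_singleton_iff] at hm
  rcases hm with h | h
  · exact spine_nonleaf s (Nat.zero_le k) (h ▸ hx)
  · exact spine_nonleaf s (Nat.zero_le k) (h ▸ hy)

lemma pruned_adj {a b : nonleaves G} : (pruned G).Adj a b ↔ G.Adj ↑a ↑b := Iff.rfl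

lemma no_adj_prunedleaves (hL : IsLobster G) (s : SpineEnum G k) {x y : nonleaves G}
    (hxy : (pruned G).Adj x y) (hx : (pruned G).IsLeafVert x)
    (hy : (pruned G).IsLeafVert y) : False := by
  have hcl : ∀ a ∈ ({x, y} : Set (nonleaves G)), ∀ b, (pruned G).Adj a b →
      b ∈ ({x, y} : Set (nonleaves G)) := by
    rintro a ha b hb
    simp only [Set.mem_insert_iff, Set.mem_singleton_iff] at ha ⊢
    rcases ha with rfl | rfl
    · right; exact leaf_adj_unique hx hb hxy
    · left; exact leaf_adj_unique hy hb hxy.symm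
  obtain ⟨h0, h0'⟩ := spine_nonleafP s (Nat.zero_le k)
  obtain ⟨p⟩ := hL.2.1.isConnected.preconnected (⟨s.v 0, h0⟩ : nonleaves G) x
  have hm := aux_walk_closed hcl p.reverse (Set.mem_insert x _)
  simp only [Set.mem_insert_iff, Set.mem_singleton_iff] at hm
  rcases hm with h | h
  · exact h0' (h ▸ hx)
  · exact h0' (h ▸ hy)

lemma spine_adj_of_nonspine_nonleaf (hL : IsLobster G) (s : SpineEnum G k) {x : V}
    (hx : ¬ G.IsLeafVert x) (hxs : x ∉ spineSet G) :
    ∃ j ≤ k, G.Adj x (s.v j) := by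
  have hxm : x ∈ nonleaves G := hx
  have hpl : (pruned G).IsLeafVert ⟨x, hxm⟩ := by
    by_contra h
    exact hxs ⟨hxm, h⟩
  obtain ⟨⟨z, hzm⟩, hz, -⟩ := leaf_nbr hpl
  have hGz : G.Adj x z := pruned_adj.mp hz
  by_cases hzs : z ∈ spineSet G
  · obtain ⟨j, hj, rfl⟩ := (s.mem z).1 hzs
    exact ⟨j, hj, hGz⟩
  · exfalso
    have hplz : (pruned G).IsLeafVert ⟨z, hzm⟩ := by
      by_contra h
      exact hzs ⟨hzm, h⟩
    exact no_adj_prunedleaves hL s hz hpl hplz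

lemma near_spine (hL : IsLobster G) (s : SpineEnum G k) (u : V) :
    ∃ j ≤ k, G.dist u (s.v j) ≤ 2 := by
  by_cases hus : u ∈ spineSet G
  · obtain ⟨j, hj, rfl⟩ := (s.mem u).1 hus
    exact ⟨j, hj, by simp [SimpleGraph.dist_self]⟩
  by_cases hul : G.IsLeafVert u
  · obtain ⟨y, hy, -⟩ := leaf_nbr hul
    have hyl : ¬ G.IsLeafVert y := fun h => no_adj_leaves hL s hy hul h
    by_cases hys : y ∈ spineSet G
    · obtain ⟨j, hj, rfl⟩ := (s.mem y).1 hys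
      refine ⟨j, hj, ?_⟩
      have := SimpleGraph.dist_le (SimpleGraph.Walk.cons hy SimpleGraph.Walk.nil)
      simpa using Nat.le_trans this (by norm_num)
    · obtain ⟨j, hj, hadj⟩ := spine_adj_of_nonspine_nonleaf hL s hyl hys
      refine ⟨j, hj, ?_⟩
      have := SimpleGraph.dist_le
        (SimpleGraph.Walk.cons hy (SimpleGraph.Walk.cons hadj SimpleGraph.Walk.nil))
      simpa using this
  · obtain ⟨j, hj, hadj⟩ := spine_adj_of_nonspine_nonleaf hL s hul hus
    refine ⟨j, hj, ?_⟩
    have := SimpleGraph.dist_le (SimpleGraph.Walk.cons hadj SimpleGraph.Walk.nil)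
    simpa using Nat.le_trans this (by norm_num)

lemma branchRoot_spec (s : SpineEnum G k) {i : ℕ} (hi : i ≤ k) {w : V}
    (hw : w ∈ branchRoots G (s.v i)) : G.Adj (s.v i) w ∧ w ∉ spineSet G := by
  have h : (offSpine G).Adj (s.v i) w := hw
  rw [offSpine_adj_iff] at h
  exact ⟨h.1, fun hws => h.2 ⟨spine_mem s hi, hws⟩⟩

lemma mem_ssub_self (u : V) : u ∈ Ssub G u := SimpleGraph.Reachable.refl u

lemma mem_ssub_of_adj {u w : V} (hadj : G.Adj u w)
    (hws : w ∉ spineSet G) : w ∈ Ssub G u :=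
  (offSpine_adj_iff.mpr ⟨hadj, fun h => hws h.2⟩).reachable

lemma mem_ssub_of_adj2 {u w x : V} (hadj : G.Adj u w)
    (hws : w ∉ spineSet G) (hwx : G.Adj w x) : x ∈ Ssub G u :=
  SimpleGraph.Reachable.trans (mem_ssub_of_adj hadj hws)
    ((offSpine_adj_iff.mpr ⟨hwx, fun h => hws h.1⟩).reachable)

lemma nonleaf_branchroot_leafchild (hL : IsLobster G) (s : SpineEnum G k) {i : ℕ}
    (hi : i ≤ k) {w : V} (hadj : G.Adj (s.v i) w) (hws : w ∉ spineSet G)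
    (hwn : ¬ G.IsLeafVert w) :
    ∃ x, G.Adj w x ∧ G.IsLeafVert x ∧ x ≠ s.v i ∧ x ∉ spineSet G := by
  have hx : ∃ x, G.Adj w x ∧ x ≠ s.v i := by
    by_contra hcon
    push_neg at hcon
    apply hwn
    have hns : G.neighborSet w = {s.v i} := by
      apply Set.eq_singleton_iff_unique_mem.mpr
      exact ⟨hadj.symm, fun z hz => hcon z hz⟩
    show (G.neighborSet w).ncard = 1
    rw [hns, Set.ncard_singleton]
  obtain ⟨x, hwx, hxvi⟩ := hx
  have hxs : x ∉ spineSet G := by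
    intro hxsp
    obtain ⟨j, hj, rfl⟩ := (s.mem x).1 hxsp
    have hmem : s.v j ∈ Ssub G (s.v i) := mem_ssub_of_adj2 hadj hws hwx
    have hij := ssub_spine hL.1 s hi hj hmem
    exact hxvi (congrArg s.v hij.symm)
  by_cases hxl : G.IsLeafVert x
  · exact ⟨x, hwx, hxl, hxvi, hxs⟩
  · exfalso
    have hplw : (pruned G).IsLeafVert ⟨w, hwn⟩ := by
      by_contra h; exact hws ⟨hwn, h⟩
    have hplx : (pruned G).IsLeafVert ⟨x, hxl⟩ := by
      by_contra h; exact hxs ⟨hxl, h⟩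
    exact no_adj_prunedleaves hL s (pruned_adj.mpr hwx) hplw hplx

lemma S1_branchroot_leaf (hL : IsLobster G) (s : SpineEnum G k) {i : ℕ} (hi : i ≤ k)
    (hS1 : typeS1 G (s.v i)) {w : V} (hadj : G.Adj (s.v i) w) (hws : w ∉ spineSet G) :
    G.IsLeafVert w := by
  by_contra hwn
  obtain ⟨x, hwx, hxl, hxvi, hxs⟩ := nonleaf_branchroot_leafchild hL s hi hadj hws hwn
  have hmem : x ∈ Ssub G (s.v i) := mem_ssub_of_adj2 hadj hws hwx
  have hdist := hS1 x hmem hxl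
  have hadj2 : G.Adj (s.v i) x := SimpleGraph.dist_eq_one_iff_adj.mp hdist
  have hp1 : (SimpleGraph.Walk.cons hadj2 SimpleGraph.Walk.nil).IsPath := by
    simp [SimpleGraph.Walk.isPath_def, hadj2.ne]
  have hp2 : (SimpleGraph.Walk.cons hadj
      (SimpleGraph.Walk.cons hwx SimpleGraph.Walk.nil)).IsPath := by
    simp [SimpleGraph.Walk.isPath_def, hadj.ne, hwx.ne, Ne.symm hxvi]
  have := tree_path_unique hL.1 hp1 hp2
  simpa using congrArg SimpleGraph.Walk.length this

lemma S2_branchroot_nonleaf (s : SpineEnum G k) {i : ℕ} (hi : i ≤ k)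
    (hS2 : typeS2 G (s.v i)) {w : V} (hadj : G.Adj (s.v i) w) (hws : w ∉ spineSet G) :
    ¬ G.IsLeafVert w := by
  intro hwl
  have hmem : w ∈ Ssub G (s.v i) := mem_ssub_of_adj hadj hws
  have h2 := hS2 w hmem hwl
  have h1 : G.dist (s.v i) w = 1 := SimpleGraph.dist_eq_one_iff_adj.mpr hadj
  omega

lemma S1_pruned_nbr (hL : IsLobster G) (s : SpineEnum G k) {i : ℕ} (hi : i ≤ k)
    (hS1 : typeS1 G (s.v i)) {u : V}
    (hadj : G.Adj (s.v i) u) (hun : ¬ G.IsLeafVert u) :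
    ∃ j ≤ k, u = s.v j ∧ (i + 1 = j ∨ j + 1 = i) := by
  by_cases hus : u ∈ spineSet G
  · obtain ⟨j, hj, rfl⟩ := (s.mem u).1 hus
    exact ⟨j, hj, rfl, (s.adj i hi j hj).1 hadj⟩
  · exact absurd (S1_branchroot_leaf hL s hi hS1 hadj hus) hun

lemma not_S1_end (hL : IsLobster G) (s : SpineEnum G k) {i j₀ : ℕ} (hi : i ≤ k)
    (hj₀ : j₀ ≤ k) (huniq : ∀ j ≤ k, (i + 1 = j ∨ j + 1 = i) → j = j₀)
    (hadj0 : G.Adj (s.v i) (s.v j₀)) : ¬ typeS1 G (s.v i) := by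
  intro hS1
  obtain ⟨h0, h0'⟩ := spine_nonleafP s hi
  apply h0'
  have hset : (pruned G).neighborSet ⟨s.v i, h0⟩
      = {(⟨s.v j₀, show s.v j₀ ∈ nonleaves G from spine_nonleaf s hj₀⟩ : nonleaves G)} := by
    ext u
    obtain ⟨u, hu⟩ := u
    simp only [SimpleGraph.mem_neighborSet, Set.mem_singleton_iff, Subtype.mk.injEq]
    constructor
    · intro hadj
      have hG : G.Adj (s.v i) u := pruned_adj.mp hadj
      obtain ⟨j, hj, rfl, hj2⟩ := S1_pruned_nbr hL s hi hS1 hG hu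
      rw [huniq j hj hj2]
    · rintro rfl
      exact pruned_adj.mpr hadj0
  show ((pruned G).neighborSet _).ncard = 1
  rw [hset, Set.ncard_singleton]

lemma end_S2_0 (hL : IsLobster G) (s : SpineEnum G k) (hlu : LocallyUniform G s)
    (hk : 1 ≤ k) : typeS2 G (s.v 0) := by
  refine (hlu 0 (Nat.zero_le k)).resolve_left ?_
  exact not_S1_end hL s (Nat.zero_le k) hk (fun j hj hj2 => by omega) (spine_adj s hk)

lemma end_S2_k (hL : IsLobster G) (s : SpineEnum G k) (hlu : LocallyUniform G s)
    (hk : 1 ≤ k) : typeS2 G (s.v k) := by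
  refine (hlu k le_rfl).resolve_left ?_
  have hadj : G.Adj (s.v k) (s.v (k - 1)) := by
    have h := spine_adj s (show (k - 1) + 1 ≤ k by omega)
    have hkk : k - 1 + 1 = k := by omega
    rw [hkk] at h
    exact h.symm
  exact not_S1_end hL s le_rfl (by omega) (fun j hj hj2 => by omega) hadj

end Stmt10Aux2
section Stmt10Aux3

set_option linter.unusedSectionVars false

variable [Fintype V] {G : SimpleGraph V} {k : ℕ}

/-- A short pendant path ("tail") hanging from the spine vertex `s.v i`. -/
structure TailAt (G : SimpleGraph V) {k : ℕ} (s : SpineEnum G k) (i : ℕ) where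
  pt : V
  q : G.Walk (s.v i) pt
  isPath : q.IsPath
  hleaf : G.IsLeafVert pt
  len1 : 1 ≤ q.length
  len2 : q.length ≤ 2
  hsub : ∀ x ∈ q.support, x ∈ Ssub G (s.v i)
  hspine : ∀ x ∈ q.support, x ∈ spineSet G → x = s.v i

def tail1 (s : SpineEnum G k) {i : ℕ} {w : V} (hadj : G.Adj (s.v i) w)
    (hws : w ∉ spineSet G) (hwl : G.IsLeafVert w) : TailAt G s i where
  pt := w
  q := SimpleGraph.Walk.cons hadj SimpleGraph.Walk.nil
  isPath := by simp [SimpleGraph.Walk.isPath_def, hadj.ne]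
  hleaf := hwl
  len1 := by simp
  len2 := by simp
  hsub := by
    intro x hx
    simp only [SimpleGraph.Walk.support_cons, SimpleGraph.Walk.support_nil,
      List.mem_cons, List.mem_singleton, List.not_mem_nil, or_false] at hx
    rcases hx with rfl | rfl
    · exact mem_ssub_self _
    · exact mem_ssub_of_adj hadj hws
  hspine := by
    intro x hx hxs
    simp only [SimpleGraph.Walk.support_cons, SimpleGraph.Walk.support_nil,
      List.mem_cons, List.mem_singleton, List.not_mem_nil, or_false] at hx
    rcases hx with rfl | rfl
    · rfl
    · exact absurd hxs hws

def tail2 (s : SpineEnum G k) {i : ℕ} {w x : V} (hadj : G.Adj (s.v i) w)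
    (hws : w ∉ spineSet G) (hwx : G.Adj w x) (hxl : G.IsLeafVert x)
    (hxvi : x ≠ s.v i) (hxs : x ∉ spineSet G) : TailAt G s i where
  pt := x
  q := SimpleGraph.Walk.cons hadj (SimpleGraph.Walk.cons hwx SimpleGraph.Walk.nil)
  isPath := by simp [SimpleGraph.Walk.isPath_def, hadj.ne, hwx.ne, Ne.symm hxvi]
  hleaf := hxl
  len1 := by simp
  len2 := by simp
  hsub := by
    intro y hy
    simp only [SimpleGraph.Walk.support_cons, SimpleGraph.Walk.support_nil,
      List.mem_cons, List.mem_singleton, List.not_mem_nil, or_false] at hy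
    rcases hy with rfl | rfl | rfl
    · exact mem_ssub_self _
    · exact mem_ssub_of_adj hadj hws
    · exact mem_ssub_of_adj2 hadj hws hwx
  hspine := by
    intro y hy hys
    simp only [SimpleGraph.Walk.support_cons, SimpleGraph.Walk.support_nil,
      List.mem_cons, List.mem_singleton, List.not_mem_nil, or_false] at hy
    rcases hy with rfl | rfl | rfl
    · rfl
    · exact absurd hys hws
    · exact absurd hys hxs

lemma tail2_support (s : SpineEnum G k) {i : ℕ} {w x : V} (hadj : G.Adj (s.v i) w)
    (hws : w ∉ spineSet G) (hwx : G.Adj w x) (hxl : G.IsLeafVert x)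
    (hxvi : x ≠ s.v i) (hxs : x ∉ spineSet G) :
    (tail2 s hadj hws hwx hxl hxvi hxs).q.support = [s.v i, w, x] := by
  simp [tail2]

lemma exists_tail (hL : IsLobster G) (s : SpineEnum G k) (hlu : LocallyUniform G s)
    (h2 : IsTwoLobster G s) {i : ℕ} (hi : i ≤ k) : Nonempty (TailAt G s i) := by
  have hbr : (branchRoots G (s.v i)).Nonempty := by
    have := h2 i hi
    exact Set.nonempty_of_ncard_ne_zero (by omega)
  obtain ⟨w, hw⟩ := hbr
  obtain ⟨hadj, hws⟩ := branchRoot_spec s hi hw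
  rcases hlu i hi with hS1 | hS2
  · exact ⟨tail1 s hadj hws (S1_branchroot_leaf hL s hi hS1 hadj hws)⟩
  · have hwn := S2_branchroot_nonleaf s hi hS2 hadj hws
    obtain ⟨x, hwx, hxl, hxvi, hxs⟩ := nonleaf_branchroot_leafchild hL s hi hadj hws hwn
    exact ⟨tail2 s hadj hws hwx hxl hxvi hxs⟩

lemma exists_end_tails (hL : IsLobster G) (s : SpineEnum G k)
    (h2 : IsTwoLobster G s) {i : ℕ} (hi : i ≤ k) (hS2 : typeS2 G (s.v i)) :
    ∃ t t' : TailAt G s i, t.q.length = 2 ∧ t'.q.length = 2 ∧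
      (∀ x ∈ t.q.support, x ∈ t'.q.support → x = s.v i) := by
  obtain ⟨w1, hw1, w2, hw2, hww⟩ :
      ∃ w1 ∈ branchRoots G (s.v i), ∃ w2 ∈ branchRoots G (s.v i), w1 ≠ w2 := by
    have h1lt : 1 < (branchRoots G (s.v i)).ncard := by
      have := h2 i hi; omega
    obtain ⟨a, b, ha, hb, hab⟩ := (Set.one_lt_ncard_iff (Set.toFinite _)).1 h1lt
    exact ⟨a, ha, b, hb, hab⟩
  obtain ⟨hadj1, hws1⟩ := branchRoot_spec s hi hw1
  obtain ⟨hadj2, hws2⟩ := branchRoot_spec s hi hw2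
  have hwn1 := S2_branchroot_nonleaf s hi hS2 hadj1 hws1
  have hwn2 := S2_branchroot_nonleaf s hi hS2 hadj2 hws2
  obtain ⟨x1, hwx1, hxl1, hxvi1, hxs1⟩ := nonleaf_branchroot_leafchild hL s hi hadj1 hws1 hwn1
  obtain ⟨x2, hwx2, hxl2, hxvi2, hxs2⟩ := nonleaf_branchroot_leafchild hL s hi hadj2 hws2 hwn2
  refine ⟨tail2 s hadj1 hws1 hwx1 hxl1 hxvi1 hxs1, tail2 s hadj2 hws2 hwx2 hxl2 hxvi2 hxs2,
    rfl, rfl, ?_⟩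
  intro y hy hy'
  rw [tail2_support] at hy hy'
  have hx12 : x1 ≠ x2 := by
    intro h
    subst h
    exact hww (leaf_adj_unique hxl1 hwx1.symm hwx2.symm)
  simp only [List.mem_cons, List.mem_singleton, List.not_mem_nil, or_false] at hy hy'
  rcases hy with rfl | rfl | rfl
  · rfl
  · rcases hy' with h | h | h
    · exact h
    · exact absurd h hww
    · exact absurd hxl2 (h ▸ hwn1)
  · rcases hy' with h | h | h
    · exact h
    · exact absurd hxl1 (h.symm ▸ hwn2)
    · exact absurd h hx12

end Stmt10Aux3
section Stmt10Aux4

set_option linter.unusedSectionVars false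

variable [Fintype V] {G : SimpleGraph V} {k : ℕ}

lemma start_not_mem_support_tail {u v : V} {p : G.Walk u v} (hp : p.IsPath) :
    u ∉ p.support.tail := by
  have h := hp.support_nodup
  rw [p.support_eq_cons] at h
  exact (List.nodup_cons.mp h).1

lemma dist_tails_same (ht : G.IsTree) (s : SpineEnum G k) {i : ℕ}
    (t t' : TailAt G s i) (hdisj : ∀ x ∈ t.q.support, x ∈ t'.q.support → x = s.v i) :
    G.dist t.pt t'.pt = t.q.length + t'.q.length := by
  have hW : (t.q.reverse.append t'.q).IsPath := by
    rw [SimpleGraph.Walk.isPath_def, SimpleGraph.Walk.support_append,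
      SimpleGraph.Walk.support_reverse]
    refine List.Nodup.append (List.nodup_reverse.mpr t.isPath.support_nodup)
      (List.Nodup.sublist (List.tail_sublist _) t'.isPath.support_nodup) ?_
    intro a ha ha'
    rw [List.mem_reverse] at ha
    have haa := hdisj a ha (List.mem_of_mem_tail ha')
    subst haa
    exact start_not_mem_support_tail t'.isPath ha'
  have hd := tree_dist_eq ht hW
  rwa [SimpleGraph.Walk.length_append, SimpleGraph.Walk.length_reverse] at hd

lemma dist_tails_ne (ht : G.IsTree) (s : SpineEnum G k) {i j : ℕ}
    (hij : i < j) (hj : j ≤ k) (t : TailAt G s i) (t' : TailAt G s j) :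
    G.dist t.pt t'.pt = t.q.length + (j - i) + t'.q.length := by
  have hi : i ≤ k := by omega
  set M : G.Walk (s.v i) (s.v j) := (spineWalk s (j - i) i (by omega)).copy rfl
    (show s.v (i + (j - i)) = s.v j by congr 1; omega) with hM
  have hMsup : M.support = (List.range (j - i + 1)).map (fun m => s.v (i + m)) := by
    rw [hM, SimpleGraph.Walk.support_copy, spineWalk_support]
  have hMpath : M.IsPath := by
    rw [SimpleGraph.Walk.isPath_def, hMsup, ← spineWalk_support s (j - i) i (by omega),
      ← SimpleGraph.Walk.isPath_def]
    exact spineWalk_isPath s _ _ _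
  have hMspine : ∀ x ∈ M.support, x ∈ spineSet G := by
    intro x hx
    rw [hMsup] at hx
    obtain ⟨m, hm, rfl⟩ := List.mem_map.mp hx
    rw [List.mem_range] at hm
    exact spine_mem s (by omega)
  set N := M.append t'.q with hN
  have hNsup : N.support = M.support ++ t'.q.support.tail :=
    SimpleGraph.Walk.support_append _ _
  have hNpath : N.IsPath := by
    rw [SimpleGraph.Walk.isPath_def, hNsup]
    refine List.Nodup.append hMpath.support_nodup
      (List.Nodup.sublist (List.tail_sublist _) t'.isPath.support_nodup) ?_
    intro a ha ha'
    have haa := t'.hspine a (List.mem_of_mem_tail ha') (hMspine a ha)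
    subst haa
    exact start_not_mem_support_tail t'.isPath ha'
  have hW : (t.q.reverse.append N).IsPath := by
    rw [SimpleGraph.Walk.isPath_def, SimpleGraph.Walk.support_append,
      SimpleGraph.Walk.support_reverse]
    refine List.Nodup.append (List.nodup_reverse.mpr t.isPath.support_nodup)
      (List.Nodup.sublist (List.tail_sublist _) hNpath.support_nodup) ?_
    intro a ha ha'
    rw [List.mem_reverse] at ha
    have haN : a ∈ N.support := List.mem_of_mem_tail ha'
    rw [hNsup, List.mem_append] at haN
    rcases haN with haM | haT
    · have haa := t.hspine a ha (hMspine a haM)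
      subst haa
      exact start_not_mem_support_tail hNpath ha'
    · have h1 := t.hsub a ha
      have h2 := t'.hsub a (List.mem_of_mem_tail haT)
      have := ssub_disjoint ht s hi hj h1 h2
      omega
  have hd := tree_dist_eq ht hW
  have hNlen : N.length = (j - i) + t'.q.length := by
    rw [hN, SimpleGraph.Walk.length_append, hM, SimpleGraph.Walk.length_copy,
      spineWalk_length]
  rw [SimpleGraph.Walk.length_append, SimpleGraph.Walk.length_reverse, hNlen] at hd
  omega

end Stmt10Aux4
section Stmt10Aux5

set_option linter.unusedSectionVars false

variable [Fintype V] {G : SimpleGraph V} {k : ℕ}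

lemma ecc_ge (G : SimpleGraph V) (v u : V) : G.dist v u ≤ ecc G v :=
  Finset.le_sup (Finset.mem_univ u)

lemma gdiam_ge (G : SimpleGraph V) (v : V) : ecc G v ≤ gdiam G :=
  Finset.le_sup (Finset.mem_univ v)

lemma ne_of_dist_eq {a b : V} {c : ℕ} (h : G.dist a b = c) (hc : 0 < c) : a ≠ b := by
  rintro rfl
  rw [SimpleGraph.dist_self] at h
  omega

lemma spine_dist_le (ht : G.IsTree) (s : SpineEnum G k) {i j : ℕ} (hi : i ≤ k)
    (hj : j ≤ k) : G.dist (s.v i) (s.v j) ≤ k := by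
  rcases le_total i j with h | h
  · rw [show j = i + (j - i) from by omega, spine_dist ht s (by omega)]
    omega
  · rw [SimpleGraph.dist_comm, show i = j + (i - j) from by omega,
      spine_dist ht s (by omega)]
    omega

lemma dist_le_k4 (hL : IsLobster G) (s : SpineEnum G k) (u w : V) :
    G.dist u w ≤ k + 4 := by
  obtain ⟨i, hi, hui⟩ := near_spine hL s u
  obtain ⟨j, hj, hwj⟩ := near_spine hL s w
  have ht := hL.1
  have hconn := ht.isConnected
  have h1 : G.dist u w ≤ G.dist u (s.v i) + G.dist (s.v i) w := hconn.dist_triangle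
  have h2 : G.dist (s.v i) w ≤ G.dist (s.v i) (s.v j) + G.dist (s.v j) w :=
    hconn.dist_triangle
  have h3 : G.dist (s.v i) (s.v j) ≤ k := spine_dist_le ht s hi hj
  have h4 : G.dist (s.v j) w ≤ 2 := by rw [SimpleGraph.dist_comm]; exact hwj
  omega

end Stmt10Aux5
/-- for every locally uniform 2-lobster `L` of length `k ≥ 1`,
`β_b(L) ≥ 2(k − 1) + 12 = 2(diam(L) − 1) + 4`. -/
theorem stmt10 {V : Type*} [Fintype V] (G : SimpleGraph V) (k : ℕ) (hk : 1 ≤ k)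
    (hL : IsLobster G) (s : SpineEnum G k) (hlu : LocallyUniform G s)
    (h2 : IsTwoLobster G s) :
    2 * (k - 1) + 12 ≤ betaB G ∧ 2 * (k - 1) + 12 = 2 * (gdiam G - 1) + 4 := by
  classical
  have ht : G.IsTree := hL.1
  obtain ⟨t0, t0', h0len, h0len', h0disj⟩ :=
    exists_end_tails hL s h2 (Nat.zero_le k) (end_S2_0 hL s hlu hk)
  obtain ⟨tk, tk', hklen, hklen', hkdisj⟩ :=
    exists_end_tails hL s h2 le_rfl (end_S2_k hL s hlu hk)
  have hTex : ∀ i, i ≤ k → Nonempty (TailAt G s i) := fun i hi =>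
    exists_tail hL s hlu h2 hi
  obtain ⟨L, D, hLD⟩ : ∃ (L : ℕ → V) (D : ℕ → ℕ), ∀ i, 1 ≤ i → i ≤ k - 1 →
      ∃ t : TailAt G s i, L i = t.pt ∧ D i = t.q.length := by
    refine ⟨fun i => if hi : i ≤ k then (hTex i hi).some.pt else t0.pt,
      fun i => if hi : i ≤ k then (hTex i hi).some.q.length else 1, ?_⟩
    intro i hi1 hi2
    have hi : i ≤ k := by omega
    exact ⟨(hTex i hi).some, dif_pos hi, dif_pos hi⟩
  -- distance facts
  have hD : ∀ i, 1 ≤ i → i ≤ k - 1 → 1 ≤ D i ∧ D i ≤ 2 := by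
    intro i h1 h2'
    obtain ⟨t, -, hDt⟩ := hLD i h1 h2'
    rw [hDt]
    exact ⟨t.len1, t.len2⟩
  have h00' : G.dist t0.pt t0'.pt = 4 := by
    rw [dist_tails_same ht s t0 t0' h0disj, h0len, h0len']
  have hkk' : G.dist tk.pt tk'.pt = 4 := by
    rw [dist_tails_same ht s tk tk' hkdisj, hklen, hklen']
  have h0k : G.dist t0.pt tk.pt = k + 4 := by
    have h := dist_tails_ne ht s (show (0:ℕ) < k from hk) le_rfl t0 tk
    rw [h0len, hklen] at h
    omega
  have h0k' : G.dist t0.pt tk'.pt = k + 4 := by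
    have h := dist_tails_ne ht s (show (0:ℕ) < k from hk) le_rfl t0 tk'
    rw [h0len, hklen'] at h
    omega
  have h0'k : G.dist t0'.pt tk.pt = k + 4 := by
    have h := dist_tails_ne ht s (show (0:ℕ) < k from hk) le_rfl t0' tk
    rw [h0len', hklen] at h
    omega
  have h0'k' : G.dist t0'.pt tk'.pt = k + 4 := by
    have h := dist_tails_ne ht s (show (0:ℕ) < k from hk) le_rfl t0' tk'
    rw [h0len', hklen'] at h
    omega
  have h0L : ∀ i, 1 ≤ i → i ≤ k - 1 → G.dist t0.pt (L i) = 2 + i + D i := by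
    intro i h1 h2'
    obtain ⟨t, hLt, hDt⟩ := hLD i h1 h2'
    have h := dist_tails_ne ht s (show 0 < i from h1) (by omega) t0 t
    rw [h0len] at h
    rw [hLt, hDt, h]
    omega
  have h0'L : ∀ i, 1 ≤ i → i ≤ k - 1 → G.dist t0'.pt (L i) = 2 + i + D i := by
    intro i h1 h2'
    obtain ⟨t, hLt, hDt⟩ := hLD i h1 h2'
    have h := dist_tails_ne ht s (show 0 < i from h1) (by omega) t0' t
    rw [h0len'] at h
    rw [hLt, hDt, h]
    omega
  have hkL : ∀ i, 1 ≤ i → i ≤ k - 1 → G.dist (L i) tk.pt = D i + (k - i) + 2 := by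
    intro i h1 h2'
    obtain ⟨t, hLt, hDt⟩ := hLD i h1 h2'
    have h := dist_tails_ne ht s (show i < k by omega) le_rfl t tk
    rw [hklen] at h
    rw [hLt, hDt, h]
  have hk'L : ∀ i, 1 ≤ i → i ≤ k - 1 → G.dist (L i) tk'.pt = D i + (k - i) + 2 := by
    intro i h1 h2'
    obtain ⟨t, hLt, hDt⟩ := hLD i h1 h2'
    have h := dist_tails_ne ht s (show i < k by omega) le_rfl t tk'
    rw [hklen'] at h
    rw [hLt, hDt, h]
  have hLL : ∀ i j, 1 ≤ i → i ≤ k - 1 → 1 ≤ j → j ≤ k - 1 → i < j →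
      G.dist (L i) (L j) = D i + (j - i) + D j := by
    intro i j hi1 hi2 hj1 hj2 hij
    obtain ⟨t, hLt, hDt⟩ := hLD i hi1 hi2
    obtain ⟨t', hLt', hDt'⟩ := hLD j hj1 hj2
    rw [hLt, hDt, hLt', hDt']
    exact dist_tails_ne ht s hij (by omega) t t'
  -- distinctness
  have hne00' : t0.pt ≠ t0'.pt := ne_of_dist_eq h00' (by norm_num)
  have hnekk' : tk.pt ≠ tk'.pt := ne_of_dist_eq hkk' (by norm_num)
  have hne0k : t0.pt ≠ tk.pt := ne_of_dist_eq h0k (by omega)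
  have hne0k' : t0.pt ≠ tk'.pt := ne_of_dist_eq h0k' (by omega)
  have hne0'k : t0'.pt ≠ tk.pt := ne_of_dist_eq h0'k (by omega)
  have hne0'k' : t0'.pt ≠ tk'.pt := ne_of_dist_eq h0'k' (by omega)
  have hne0L : ∀ i, 1 ≤ i → i ≤ k - 1 → t0.pt ≠ L i := fun i h1 h2' =>
    ne_of_dist_eq (h0L i h1 h2') (by omega)
  have hne0'L : ∀ i, 1 ≤ i → i ≤ k - 1 → t0'.pt ≠ L i := fun i h1 h2' =>
    ne_of_dist_eq (h0'L i h1 h2') (by omega)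
  have hnekL : ∀ i, 1 ≤ i → i ≤ k - 1 → tk.pt ≠ L i := fun i h1 h2' =>
    Ne.symm (ne_of_dist_eq (hkL i h1 h2') (by omega))
  have hnek'L : ∀ i, 1 ≤ i → i ≤ k - 1 → tk'.pt ≠ L i := fun i h1 h2' =>
    Ne.symm (ne_of_dist_eq (hk'L i h1 h2') (by omega))
  have hLinj : ∀ i j, 1 ≤ i → i ≤ k - 1 → 1 ≤ j → j ≤ k - 1 → i ≠ j → L i ≠ L j := by
    intro i j hi1 hi2 hj1 hj2 hij
    rcases Nat.lt_or_ge i j with h | h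
    · exact ne_of_dist_eq (hLL i j hi1 hi2 hj1 hj2 h) (by omega)
    · have hj : j < i := by omega
      exact Ne.symm (ne_of_dist_eq (hLL j i hj1 hj2 hi1 hi2 hj) (by omega))
  -- the broadcast
  set f : V → ℕ := fun v =>
    (if v = t0.pt then 3 else 0) + (if v = t0'.pt then 3 else 0) +
    (if v = tk.pt then 3 else 0) + (if v = tk'.pt then 3 else 0) +
    (∑ i ∈ Finset.Icc 1 (k - 1), if v = L i then 2 else 0) with hf
  have hsumzero : ∀ v, (∀ i, 1 ≤ i → i ≤ k - 1 → v ≠ L i) →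
      (∑ i ∈ Finset.Icc 1 (k - 1), if v = L i then 2 else 0) = 0 := by
    intro v hv
    refine Finset.sum_eq_zero ?_
    intro i hi
    rw [Finset.mem_Icc] at hi
    exact if_neg (hv i hi.1 hi.2)
  have hval0 : f t0.pt = 3 := by
    simp only [hf]
    rw [if_neg hne00', if_neg hne0k, if_neg hne0k', hsumzero _ hne0L]
    simp
  have hval0' : f t0'.pt = 3 := by
    simp only [hf]
    rw [if_neg (Ne.symm hne00'), if_neg hne0'k, if_neg hne0'k',
      hsumzero _ hne0'L]
    simp
  have hvalk : f tk.pt = 3 := by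
    simp only [hf]
    rw [if_neg (Ne.symm hne0k), if_neg (Ne.symm hne0'k), if_neg hnekk',
      hsumzero _ hnekL]
    simp
  have hvalk' : f tk'.pt = 3 := by
    simp only [hf]
    rw [if_neg (Ne.symm hne0k'), if_neg (Ne.symm hne0'k'), if_neg (Ne.symm hnekk'),
      hsumzero _ hnek'L]
    simp
  have hvalL : ∀ i, 1 ≤ i → i ≤ k - 1 → f (L i) = 2 := by
    intro i h1 h2'
    simp only [hf]
    rw [if_neg (Ne.symm (hne0L i h1 h2')), if_neg (Ne.symm (hne0'L i h1 h2')),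
      if_neg (Ne.symm (hnekL i h1 h2')), if_neg (Ne.symm (hnek'L i h1 h2'))]
    have hsum : (∑ j ∈ Finset.Icc 1 (k - 1), if L i = L j then 2 else 0) = 2 := by
      rw [Finset.sum_eq_single_of_mem i (Finset.mem_Icc.mpr ⟨h1, h2'⟩)]
      · exact if_pos rfl
      · intro j hj hji
        rw [Finset.mem_Icc] at hj
        exact if_neg (hLinj i j h1 h2' hj.1 hj.2 (Ne.symm hji))
    rw [hsum]
  have hsupp : ∀ v, 0 < f v → v = t0.pt ∨ v = t0'.pt ∨ v = tk.pt ∨ v = tk'.pt ∨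
      ∃ i, 1 ≤ i ∧ i ≤ k - 1 ∧ v = L i := by
    intro v hv
    by_contra hcon
    push_neg at hcon
    obtain ⟨hc1, hc2, hc3, hc4, hc5⟩ := hcon
    have hv' : f v = 0 := by
      simp only [hf]
      rw [if_neg hc1, if_neg hc2, if_neg hc3, if_neg hc4,
        hsumzero _ (fun i h1 h2' => hc5 i h1 h2')]
    omega
  -- cost
  have hcost : bcost f = 2 * (k - 1) + 12 := by
    show (∑ v, f v) = 2 * (k - 1) + 12
    simp only [hf]
    rw [Finset.sum_add_distrib, Finset.sum_add_distrib, Finset.sum_add_distrib,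
      Finset.sum_add_distrib]
    have h1 : ∀ c : V, (∑ v, if v = c then 3 else 0) = 3 := by
      intro c
      rw [Finset.sum_ite_eq' Finset.univ c (fun _ => 3)]
      simp
    have hmid : (∑ v, ∑ i ∈ Finset.Icc 1 (k - 1), if v = L i then 2 else 0)
        = 2 * (k - 1) := by
      rw [Finset.sum_comm]
      have h2' : ∀ i ∈ Finset.Icc 1 (k - 1),
          (∑ v, if v = L i then 2 else 0) = 2 := by
        intro i _
        rw [Finset.sum_ite_eq' Finset.univ (L i) (fun _ => 2)]
        simp
      rw [Finset.sum_congr rfl h2', Finset.sum_const, Nat.card_Icc, smul_eq_mul]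
      omega
    rw [h1, h1, h1, h1, hmid]
    omega
  -- broadcast
  have hbro : IsBroadcast G f := by
    intro v
    by_cases hv : 0 < f v
    · rcases hsupp v hv with rfl | rfl | rfl | rfl | ⟨i, hi1, hi2, rfl⟩
      · have := le_trans (h0k ▸ ecc_ge G t0.pt tk.pt : k + 4 ≤ ecc G t0.pt) (le_refl _)
        rw [hval0]; omega
      · have : k + 4 ≤ ecc G t0'.pt := h0'k ▸ ecc_ge G t0'.pt tk.pt
        rw [hval0']; omega
      · have h' : G.dist tk.pt t0.pt = k + 4 := by rw [SimpleGraph.dist_comm]; exact h0k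
        have : k + 4 ≤ ecc G tk.pt := h' ▸ ecc_ge G tk.pt t0.pt
        rw [hvalk]; omega
      · have h' : G.dist tk'.pt t0.pt = k + 4 := by rw [SimpleGraph.dist_comm]; exact h0k'
        have : k + 4 ≤ ecc G tk'.pt := h' ▸ ecc_ge G tk'.pt t0.pt
        rw [hvalk']; omega
      · have hDi := hD i hi1 hi2
        have h' := hkL i hi1 hi2
        have : D i + (k - i) + 2 ≤ ecc G (L i) := h' ▸ ecc_ge G (L i) tk.pt
        rw [hvalL i hi1 hi2]; omega
    · have : f v = 0 := by omega
      rw [this]; exact Nat.zero_le _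
  -- independence
  have hind : ∀ u v : V, u ≠ v → 0 < f u → 0 < f v → max (f u) (f v) < G.dist u v := by
    intro u v huv hu hv
    rcases hsupp u hu with rfl | rfl | rfl | rfl | ⟨i, hi1, hi2, rfl⟩ <;>
      rcases hsupp v hv with rfl | rfl | rfl | rfl | ⟨j, hj1, hj2, rfl⟩
    · exact absurd rfl huv
    · rw [hval0, hval0', h00']; omega
    · rw [hval0, hvalk, h0k]; omega
    · rw [hval0, hvalk', h0k']; omega
    · have hDj := hD j hj1 hj2
      rw [hval0, hvalL j hj1 hj2, h0L j hj1 hj2]; omega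
    · rw [hval0', hval0, SimpleGraph.dist_comm, h00']; omega
    · exact absurd rfl huv
    · rw [hval0', hvalk, h0'k]; omega
    · rw [hval0', hvalk', h0'k']; omega
    · have hDj := hD j hj1 hj2
      rw [hval0', hvalL j hj1 hj2, h0'L j hj1 hj2]; omega
    · rw [hvalk, hval0, SimpleGraph.dist_comm, h0k]; omega
    · rw [hvalk, hval0', SimpleGraph.dist_comm, h0'k]; omega
    · exact absurd rfl huv
    · rw [hvalk, hvalk', hkk']; omega
    · have hDj := hD j hj1 hj2
      rw [hvalk, hvalL j hj1 hj2, SimpleGraph.dist_comm, hkL j hj1 hj2]; omega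
    · rw [hvalk', hval0, SimpleGraph.dist_comm, h0k']; omega
    · rw [hvalk', hval0', SimpleGraph.dist_comm, h0'k']; omega
    · rw [hvalk', hvalk, SimpleGraph.dist_comm, hkk']; omega
    · exact absurd rfl huv
    · have hDj := hD j hj1 hj2
      rw [hvalk', hvalL j hj1 hj2, SimpleGraph.dist_comm, hk'L j hj1 hj2]; omega
    · have hDi := hD i hi1 hi2
      rw [hvalL i hi1 hi2, hval0, SimpleGraph.dist_comm, h0L i hi1 hi2]; omega
    · have hDi := hD i hi1 hi2
      rw [hvalL i hi1 hi2, hval0', SimpleGraph.dist_comm, h0'L i hi1 hi2]; omega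
    · have hDi := hD i hi1 hi2
      rw [hvalL i hi1 hi2, hvalk, hkL i hi1 hi2]; omega
    · have hDi := hD i hi1 hi2
      rw [hvalL i hi1 hi2, hvalk', hk'L i hi1 hi2]; omega
    · have hDi := hD i hi1 hi2
      have hDj := hD j hj1 hj2
      rcases Nat.lt_trichotomy i j with h | h | h
      · rw [hvalL i hi1 hi2, hvalL j hj1 hj2, hLL i j hi1 hi2 hj1 hj2 h]; omega
      · exact absurd (by rw [h]) huv
      · rw [hvalL i hi1 hi2, hvalL j hj1 hj2, SimpleGraph.dist_comm,
          hLL j i hj1 hj2 hi1 hi2 h]; omega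
  -- conclusion
  have hmem : 2 * (k - 1) + 12 ∈ {c : ℕ | ∃ f : V → ℕ, IsIndepBroadcast G f ∧ bcost f = c} :=
    ⟨f, ⟨hbro, hind⟩, hcost⟩
  have hbdd : BddAbove {c : ℕ | ∃ f : V → ℕ, IsIndepBroadcast G f ∧ bcost f = c} := by
    refine ⟨∑ v, ecc G v, ?_⟩
    rintro c ⟨g, ⟨hg, -⟩, rfl⟩
    exact Finset.sum_le_sum (fun v _ => hg v)
  have hb : 2 * (k - 1) + 12 ≤ betaB G := le_csSup hbdd hmem
  have hgd_le : gdiam G ≤ k + 4 :=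
    Finset.sup_le (fun v _ => Finset.sup_le (fun u _ => dist_le_k4 hL s v u))
  have hgd_ge : k + 4 ≤ gdiam G :=
    le_trans (h0k ▸ ecc_ge G t0.pt tk.pt) (gdiam_ge G t0.pt)
  exact ⟨hb, by omega⟩
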